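/- Let z : [−π,π] → ℝ² and ω : [−π,π] → ℝ be continuous, and define, for x in the open set ℝ² \ z([−π,π]), the vector field v(x) = (1/2π) ∫_{−π}^{π} (x − z(α))^⊥ / |x − z(α)|² · ω(α) dα, where (a₁,a₂)^⊥ = (−a₂, a₁). Then v is continuously differentiable on ℝ² \ z([−π,π]) and satisfies there both ∂_{x₁} v₁ + ∂_{x₂} v₂ = 0 (divergence-free) and ∂_{x₁} v₂ − ∂_{x₂} v₁ = 0 (irrotational). -/

import Mathlib

open scoped Real

/-- Partial derivative in the first variable of `f : ℝ × ℝ → ℝ`. -/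
noncomputable def pfst (f : ℝ × ℝ → ℝ) (x : ℝ × ℝ) : ℝ := deriv (fun s => f (s, x.2)) x.1

/-- Partial derivative in the second variable of `f : ℝ × ℝ → ℝ`. -/
noncomputable def psnd (f : ℝ × ℝ → ℝ) (x : ℝ × ℝ) : ℝ := deriv (fun s => f (x.1, s)) x.2

/-- Pointwise identity between the Biot–Savart kernel and a complex expression. -/
lemma biot_savart_pt (t a b : ℝ) (h : a ^ 2 + b ^ 2 ≠ 0) :
    (t / (a ^ 2 + b ^ 2)) • ((-b, a) : ℝ × ℝ) =
      ((-Complex.I * ((t : ℂ) / ((a : ℂ) + (b : ℂ) * Complex.I))).re,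
       -(-Complex.I * ((t : ℂ) / ((a : ℂ) + (b : ℂ) * Complex.I))).im) := by
  have hz : (a : ℂ) + (b : ℂ) * Complex.I ≠ 0 := by
    intro hh
    rw [Complex.ext_iff] at hh
    simp at hh
    apply h
    rw [hh.1, hh.2]; ring
  have hns : ((a : ℂ) ^ 2 + (b : ℂ) ^ 2) ≠ 0 := by
    intro hh
    apply h
    exact_mod_cast hh
  have key : -Complex.I * ((t : ℂ) / ((a : ℂ) + (b : ℂ) * Complex.I)) =
      ((t / (a ^ 2 + b ^ 2) : ℝ) : ℂ) * (-(b : ℂ) - (a : ℂ) * Complex.I) := by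
    push_cast
    rw [mul_comm, div_mul_eq_mul_div, div_mul_eq_mul_div, div_eq_div_iff hz hns]
    have h2 : Complex.I ^ 2 = -1 := Complex.I_sq
    linear_combination ((t : ℂ) * (a : ℂ) * (b : ℂ)) * h2
  rw [key]
  apply Prod.ext <;>
    · simp only [Complex.re_ofReal_mul, Complex.im_ofReal_mul, Complex.sub_re, Complex.sub_im,
        Complex.neg_re, Complex.neg_im, Complex.ofReal_re, Complex.ofReal_im, Complex.mul_re,
        Complex.mul_im, Complex.I_re, Complex.I_im, Prod.smul_mk, smul_eq_mul, Prod.fst, Prod.snd]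
      ring

set_option maxHeartbeats 1000000
open Complex Metric Set MeasureTheory intervalIntegral

/-- Complex differentiability of the parametric integral `w ↦ ∫ ω(α)/(w - ζ(α))`. -/
lemma biot_savart_aux (ζ : ℝ → ℂ) (ω : ℝ → ℝ)
    (hζ : ContinuousOn ζ (Set.Icc (-π) π)) (hω : ContinuousOn ω (Set.Icc (-π) π))
    {w : ℂ} (hw : w ∉ ζ '' Set.Icc (-π) π) :
    DifferentiableAt ℂ (fun w => ∫ α in (-π)..π, (ω α : ℂ) / (w - ζ α)) w := by
  have hpi : (0:ℝ) < π := Real.pi_pos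
  have hle : (-π:ℝ) ≤ π := by linarith
  have hIcc : IsCompact (Set.Icc (-π:ℝ) π) := isCompact_Icc
  have hS'c : IsCompact (ζ '' Set.Icc (-π) π) := hIcc.image_of_continuousOn hζ
  have hS'cl : IsClosed (ζ '' Set.Icc (-π) π) := hS'c.isClosed
  have hS'ne : (ζ '' Set.Icc (-π) π).Nonempty :=
    ⟨ζ 0, 0, Set.mem_Icc.mpr ⟨by linarith, hpi.le⟩, rfl⟩
  set ε : ℝ := infDist w (ζ '' Set.Icc (-π) π) / 2 with hεdef
  have hinf : 0 < infDist w (ζ '' Set.Icc (-π) π) :=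
    (hS'cl.notMem_iff_infDist_pos hS'ne).1 hw
  have hεpos : 0 < ε := by rw [hεdef]; linarith
  have hfar : ∀ x ∈ ball w ε, ∀ α ∈ Set.Icc (-π:ℝ) π, ε ≤ ‖x - ζ α‖ := by
    intro x hx α hα
    have h1 : infDist w (ζ '' Set.Icc (-π) π) ≤ dist w (ζ α) :=
      infDist_le_dist_of_mem (Set.mem_image_of_mem ζ hα)
    have h2 : dist x w < ε := mem_ball.mp hx
    have h3 := dist_triangle w x (ζ α)
    have h4 : dist w x = dist x w := dist_comm _ _
    have h5 : ε ≤ dist x (ζ α) := by rw [hεdef] at *; linarith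
    simpa [dist_eq_norm] using h5
  have hne : ∀ x ∈ ball w ε, ∀ α ∈ Set.Icc (-π:ℝ) π, x - ζ α ≠ 0 := by
    intro x hx α hα h0
    have h5 := hfar x hx α hα
    rw [h0, norm_zero] at h5
    linarith
  obtain ⟨C, hC⟩ := hIcc.exists_bound_of_continuousOn hω
  have hcont : ∀ x ∈ ball w ε,
      ContinuousOn (fun α => (ω α : ℂ) / (x - ζ α)) (Set.Icc (-π) π) := by
    intro x hx
    exact (Complex.continuous_ofReal.comp_continuousOn hω).div
      (continuousOn_const.sub hζ) (fun α hα => hne x hx α hα)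
  have hsub : Set.uIoc (-π:ℝ) π ⊆ Set.Icc (-π) π := by
    rw [Set.uIoc_of_le hle]; exact Set.Ioc_subset_Icc_self
  have key := intervalIntegral.hasDerivAt_integral_of_dominated_loc_of_deriv_le
    (F := fun x α => (ω α : ℂ) / (x - ζ α))
    (F' := fun x α => -(ω α : ℂ) / (x - ζ α) ^ 2)
    (bound := fun _ => C / ε ^ 2) (a := -π) (b := π) (μ := volume) (x₀ := w) (s := ball w ε) (ball_mem_nhds w hεpos)
    ?_ ?_ ?_ ?_ ?_ ?_
  · exact key.2.differentiableAt
  · filter_upwards [ball_mem_nhds w hεpos] with x hx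
    exact ((hcont x hx).mono hsub).aestronglyMeasurable measurableSet_uIoc
  · apply ContinuousOn.intervalIntegrable
    rw [Set.uIcc_of_le hle]
    exact hcont w (mem_ball_self hεpos)
  · have : ContinuousOn (fun α => -(ω α : ℂ) / (w - ζ α) ^ 2) (Set.Icc (-π) π) :=
      (Complex.continuous_ofReal.comp_continuousOn hω).neg.div
        ((continuousOn_const.sub hζ).pow 2)
        (fun α hα => pow_ne_zero 2 (hne w (mem_ball_self hεpos) α hα))
    exact (this.mono hsub).aestronglyMeasurable measurableSet_uIoc
  · refine Filter.Eventually.of_forall fun α hα x hx => ?_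
    have h1 : |ω α| ≤ C := by simpa [Real.norm_eq_abs] using hC α (hsub hα)
    have h2 : ε ≤ ‖x - ζ α‖ := hfar x hx α (hsub hα)
    have heq : ‖-(ω α : ℂ) / (x - ζ α) ^ 2‖ = |ω α| / ‖x - ζ α‖ ^ 2 := by
      rw [norm_div, norm_neg, norm_pow, Complex.norm_real, Real.norm_eq_abs]
    rw [heq]
    exact div_le_div₀ ((abs_nonneg _).trans h1) h1 (by positivity)
      (pow_le_pow_left₀ hεpos.le h2 2)
  · exact intervalIntegrable_const
  · refine Filter.Eventually.of_forall fun α hα x hx => ?_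
    have hy : x - ζ α ≠ 0 := hne x hx α (hsub hα)
    have h := (hasDerivAt_const x ((ω α : ℂ))).div
      ((hasDerivAt_id x).sub_const (ζ α)) hy
    convert h using 1
    all_goals try rfl
    simp only [id_eq]
    ring

/-- the velocity field
`v(x) = (1/2π) ∫_{−π}^{π} (x − z(α))^⊥/|x − z(α)|² ω(α) dα` produced by a vortex sheet of
continuous amplitude `ω` on a continuous curve `z` is `C¹` away from the curve, and it is
divergence-free and irrotational there. -/
theorem biot_savart_velocity_div_curl_free
    (z : ℝ → ℝ × ℝ) (ω : ℝ → ℝ)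
    (hz : ContinuousOn z (Set.Icc (-π) π)) (hω : ContinuousOn ω (Set.Icc (-π) π))
    (v : ℝ × ℝ → ℝ × ℝ)
    (hv : ∀ x : ℝ × ℝ, x ∉ z '' Set.Icc (-π) π →
      v x = (1 / (2 * π)) • ∫ α in (-π)..π,
        (ω α / ((x.1 - (z α).1) ^ 2 + (x.2 - (z α).2) ^ 2))
          • ((-(x.2 - (z α).2), x.1 - (z α).1) : ℝ × ℝ)) :
    ContDiffOn ℝ 1 v ((z '' Set.Icc (-π) π)ᶜ) ∧
      ∀ x : ℝ × ℝ, x ∉ z '' Set.Icc (-π) π →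
        pfst (fun y => (v y).1) x + psnd (fun y => (v y).2) x = 0 ∧
        pfst (fun y => (v y).2) x - psnd (fun y => (v y).1) x = 0 := by
  have hpi : (0:ℝ) < π := Real.pi_pos
  have hle : (-π:ℝ) ≤ π := by linarith
  set S : Set (ℝ × ℝ) := z '' Set.Icc (-π) π with hSdef
  set ζ : ℝ → ℂ := fun α => ((z α).1 : ℂ) + ((z α).2 : ℂ) * Complex.I with hζdef
  have hζc : ContinuousOn ζ (Set.Icc (-π) π) := by
    rw [hζdef]
    exact (Complex.continuous_ofReal.comp_continuousOn
        (continuous_fst.comp_continuousOn hz)).add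
      ((Complex.continuous_ofReal.comp_continuousOn
        (continuous_snd.comp_continuousOn hz)).mul continuousOn_const)
  set S' : Set ℂ := ζ '' Set.Icc (-π) π with hS'def
  have hS'cl : IsClosed S' := (isCompact_Icc.image_of_continuousOn hζc).isClosed
  have hopen' : IsOpen S'ᶜ := hS'cl.isOpen_compl
  have hScl : IsClosed S := by
    rw [hSdef]; exact (isCompact_Icc.image_of_continuousOn hz).isClosed
  have hSopen : IsOpen Sᶜ := hScl.isOpen_compl
  have hmem : ∀ x : ℝ × ℝ, x ∉ S → ((x.1 : ℂ) + (x.2 : ℂ) * Complex.I) ∉ S' := by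
    intro x hx hmem'
    obtain ⟨α, hα, hαx⟩ := hmem'
    apply hx
    refine ⟨α, hα, ?_⟩
    rw [hζdef] at hαx
    simp only [Complex.ext_iff, Complex.add_re, Complex.add_im, Complex.ofReal_re,
      Complex.ofReal_im, Complex.mul_re, Complex.mul_im, Complex.I_re, Complex.I_im] at hαx
    obtain ⟨h1, h2⟩ := hαx
    exact Prod.ext (by simpa using h1) (by simpa using h2)
  set g : ℂ → ℂ := fun w => ∫ α in (-π)..π, (ω α : ℂ) / (w - ζ α) with hgdef
  have hgd : ∀ w ∉ S', DifferentiableAt ℂ g w := by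
    intro w hw
    rw [hgdef]
    exact biot_savart_aux ζ ω hζc hω hw
  set F : ℂ → ℂ := fun w => (1 / (2 * π) : ℝ) • (-Complex.I * g w) with hFdef
  have hFd : ∀ w ∉ S', DifferentiableAt ℂ F w := by
    intro w hw
    rw [hFdef]
    exact ((hgd w hw).const_mul (-Complex.I)).const_smul ((1:ℝ) / (2 * π))
  -- the key representation of v through the holomorphic function F
  have hrep : ∀ x : ℝ × ℝ, x ∉ S →
      v x = ((F ((x.1 : ℂ) + (x.2 : ℂ) * Complex.I)).re,
             -(F ((x.1 : ℂ) + (x.2 : ℂ) * Complex.I)).im) := by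
    intro x hx
    set w : ℂ := (x.1 : ℂ) + (x.2 : ℂ) * Complex.I with hwdef
    have hwS' : w ∉ S' := hmem x hx
    have hyne : ∀ α ∈ Set.Icc (-π:ℝ) π, w - ζ α ≠ 0 := by
      intro α hα h0
      exact hwS' ⟨α, hα, (sub_eq_zero.mp h0).symm⟩
    have hInt : IntervalIntegrable
        (fun α => -Complex.I * ((ω α : ℂ) / (w - ζ α))) volume (-π) π := by
      apply ContinuousOn.intervalIntegrable
      rw [Set.uIcc_of_le hle]
      exact continuousOn_const.mul
        ((Complex.continuous_ofReal.comp_continuousOn hω).div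
          (continuousOn_const.sub hζc) hyne)
    set L : ℂ →L[ℝ] ℝ × ℝ := Complex.reCLM.prod (-Complex.imCLM) with hLdef
    have hLapp : ∀ u : ℂ, L u = (u.re, -u.im) := by
      intro u; rw [hLdef]; rfl
    have hFw : F w = (1 / (2 * π) : ℝ) •
        ∫ α in (-π)..π, -Complex.I * ((ω α : ℂ) / (w - ζ α)) := by
      simp only [hFdef, hgdef]
      rw [← intervalIntegral.integral_const_mul]
    have hws : ∀ α, w - ζ α =
        ((x.1 - (z α).1 : ℝ) : ℂ) + ((x.2 - (z α).2 : ℝ) : ℂ) * Complex.I := by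
      intro α
      rw [hwdef, hζdef]
      push_cast
      ring
    have hpt : ∀ α ∈ Set.uIcc (-π:ℝ) π,
        (ω α / ((x.1 - (z α).1) ^ 2 + (x.2 - (z α).2) ^ 2))
          • ((-(x.2 - (z α).2), x.1 - (z α).1) : ℝ × ℝ)
        = L (-Complex.I * ((ω α : ℂ) / (w - ζ α))) := by
      intro α hα
      rw [Set.uIcc_of_le hle] at hα
      have h0 : w - ζ α ≠ 0 := hyne α hα
      have hns : (x.1 - (z α).1) ^ 2 + (x.2 - (z α).2) ^ 2 ≠ 0 := by
        intro h
        apply h0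
        have h1 : x.1 - (z α).1 = 0 := by
          nlinarith [sq_nonneg (x.1 - (z α).1), sq_nonneg (x.2 - (z α).2)]
        have h2 : x.2 - (z α).2 = 0 := by
          nlinarith [sq_nonneg (x.1 - (z α).1), sq_nonneg (x.2 - (z α).2)]
        rw [hws α, h1, h2]
        simp
      rw [hLapp, hws α]
      exact biot_savart_pt (ω α) (x.1 - (z α).1) (x.2 - (z α).2) hns
    calc v x = (1 / (2 * π)) • ∫ α in (-π)..π,
        (ω α / ((x.1 - (z α).1) ^ 2 + (x.2 - (z α).2) ^ 2))
          • ((-(x.2 - (z α).2), x.1 - (z α).1) : ℝ × ℝ) := hv x hx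
      _ = (1 / (2 * π)) • ∫ α in (-π)..π,
          L (-Complex.I * ((ω α : ℂ) / (w - ζ α))) := by
            rw [intervalIntegral.integral_congr hpt]
      _ = (1 / (2 * π)) • L (∫ α in (-π)..π,
          -Complex.I * ((ω α : ℂ) / (w - ζ α))) := by
            rw [L.intervalIntegral_comp_comm hInt]
      _ = ((F w).re, -(F w).im) := by
            rw [hFw, hLapp]
            simp only [Prod.smul_mk, smul_eq_mul, Complex.smul_re, Complex.smul_im,
              Prod.mk.injEq]
            constructor <;> first | trivial | ring
  -- C¹ smoothness
  have hFc : ContDiffOn ℝ 1 F S'ᶜ := by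
    have hFdon : DifferentiableOn ℂ F S'ᶜ :=
      fun w hw => (hFd w hw).differentiableWithinAt
    exact (hFdon.contDiffOn hopen').restrict_scalars ℝ
  have hecd : ContDiff ℝ 1 (fun x : ℝ × ℝ => (x.1 : ℂ) + (x.2 : ℂ) * Complex.I) :=
    (Complex.ofRealCLM.contDiff.comp contDiff_fst).add
      ((Complex.ofRealCLM.contDiff.comp contDiff_snd).mul contDiff_const)
  have houter : ContDiff ℝ 1 (fun u : ℂ => ((u.re, -u.im) : ℝ × ℝ)) :=
    Complex.reCLM.contDiff.prodMk Complex.imCLM.contDiff.neg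
  have hcompc : ContDiffOn ℝ 1
      (fun x : ℝ × ℝ => ((F ((x.1 : ℂ) + (x.2 : ℂ) * Complex.I)).re,
        -(F ((x.1 : ℂ) + (x.2 : ℂ) * Complex.I)).im)) Sᶜ := by
    exact houter.comp_contDiffOn
      (hFc.comp (hecd.contDiffOn) (fun x hx => hmem x hx))
  have hC1 : ContDiffOn ℝ 1 v Sᶜ := hcompc.congr (fun x hx => hrep x hx)
  refine ⟨hC1, fun x hx => ?_⟩
  have hwS' : ((x.1 : ℂ) + (x.2 : ℂ) * Complex.I) ∉ S' := hmem x hx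
  have hc : HasDerivAt F (deriv F ((x.1 : ℂ) + (x.2 : ℂ) * Complex.I))
      ((x.1 : ℂ) + (x.2 : ℂ) * Complex.I) := (hFd _ hwS').hasDerivAt
  set c : ℂ := deriv F ((x.1 : ℂ) + (x.2 : ℂ) * Complex.I) with hcdef
  -- derivative in the first variable
  have hinner1 : HasDerivAt (fun w : ℂ => w + (x.2 : ℂ) * Complex.I) 1 ((x.1 : ℝ) : ℂ) := by
    simpa using (hasDerivAt_id ((x.1 : ℝ) : ℂ)).add_const ((x.2 : ℂ) * Complex.I)
  have h1c : HasDerivAt (fun w : ℂ => F (w + (x.2 : ℂ) * Complex.I)) c ((x.1 : ℝ) : ℂ) := by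
    have := HasDerivAt.comp (x := ((x.1 : ℝ) : ℂ)) (h₂ := F) hc hinner1
    rw [mul_one] at this; exact this
  have hinner2 : HasDerivAt (fun w : ℂ => (x.1 : ℂ) + w * Complex.I) Complex.I
      ((x.2 : ℝ) : ℂ) := by
    simpa using ((hasDerivAt_id ((x.2 : ℝ) : ℂ)).mul_const Complex.I).const_add ((x.1 : ℝ) : ℂ)
  have h2c : HasDerivAt (fun w : ℂ => F ((x.1 : ℂ) + w * Complex.I)) (c * Complex.I)
      ((x.2 : ℝ) : ℂ) := by
    have := HasDerivAt.comp (x := ((x.2 : ℝ) : ℂ)) (h₂ := F) hc hinner2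
    exact this
  have h1re : HasDerivAt (fun s : ℝ => (F ((s : ℂ) + (x.2 : ℂ) * Complex.I)).re) c.re x.1 :=
    h1c.real_of_complex
  have h1im : HasDerivAt (fun s : ℝ => -(F ((s : ℂ) + (x.2 : ℂ) * Complex.I)).im)
      (-c.im) x.1 := by
    have h := (h1c.mul_const Complex.I).real_of_complex
    simpa [Complex.mul_I_re] using h
  have h2re : HasDerivAt (fun s : ℝ => (F ((x.1 : ℂ) + (s : ℂ) * Complex.I)).re)
      (c * Complex.I).re x.2 := h2c.real_of_complex
  have h2im : HasDerivAt (fun s : ℝ => -(F ((x.1 : ℂ) + (s : ℂ) * Complex.I)).im)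
      (-(c * Complex.I).im) x.2 := by
    have h := (h2c.mul_const Complex.I).real_of_complex
    simpa [Complex.mul_I_re] using h
  -- eventual equalities
  have hnb1 : ∀ᶠ s in nhds x.1, (s, x.2) ∉ S := by
    have hopen1 : IsOpen {s : ℝ | (s, x.2) ∈ Sᶜ} :=
      hSopen.preimage (continuous_id.prodMk continuous_const)
    exact hopen1.mem_nhds hx
  have hnb2 : ∀ᶠ s in nhds x.2, (x.1, s) ∉ S := by
    have hopen2 : IsOpen {s : ℝ | (x.1, s) ∈ Sᶜ} :=
      hSopen.preimage (continuous_const.prodMk continuous_id)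
    exact hopen2.mem_nhds hx
  have hev1a : (fun s => (v (s, x.2)).1) =ᶠ[nhds x.1]
      fun s => (F ((s : ℂ) + (x.2 : ℂ) * Complex.I)).re := by
    filter_upwards [hnb1] with s hs
    rw [hrep (s, x.2) hs]
  have hev1b : (fun s => (v (s, x.2)).2) =ᶠ[nhds x.1]
      fun s => -(F ((s : ℂ) + (x.2 : ℂ) * Complex.I)).im := by
    filter_upwards [hnb1] with s hs
    rw [hrep (s, x.2) hs]
  have hev2a : (fun s => (v (x.1, s)).1) =ᶠ[nhds x.2]
      fun s => (F ((x.1 : ℂ) + (s : ℂ) * Complex.I)).re := by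
    filter_upwards [hnb2] with s hs
    rw [hrep (x.1, s) hs]
  have hev2b : (fun s => (v (x.1, s)).2) =ᶠ[nhds x.2]
      fun s => -(F ((x.1 : ℂ) + (s : ℂ) * Complex.I)).im := by
    filter_upwards [hnb2] with s hs
    rw [hrep (x.1, s) hs]
  have d11 : deriv (fun s => (v (s, x.2)).1) x.1 = c.re :=
    (h1re.congr_of_eventuallyEq hev1a).deriv
  have d12 : deriv (fun s => (v (s, x.2)).2) x.1 = -c.im :=
    (h1im.congr_of_eventuallyEq hev1b).deriv
  have d21 : deriv (fun s => (v (x.1, s)).1) x.2 = (c * Complex.I).re :=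
    (h2re.congr_of_eventuallyEq hev2a).deriv
  have d22 : deriv (fun s => (v (x.1, s)).2) x.2 = -(c * Complex.I).im :=
    (h2im.congr_of_eventuallyEq hev2b).deriv
  constructor
  · show deriv (fun s => (v (s, x.2)).1) x.1 + deriv (fun s => (v (x.1, s)).2) x.2 = 0
    rw [d11, d22, Complex.mul_I_im]
    ring
  · show deriv (fun s => (v (s, x.2)).2) x.1 - deriv (fun s => (v (x.1, s)).1) x.2 = 0
    rw [d12, d21, Complex.mul_I_re]
    ring
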